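/- Let V : ℝ → ℝ be defined by V(q) := −(1/2)/√(q² + 2(q − 1/2)²) − (1/2)/√((q − 1)² + 2(q − 1/2)²) + 2. Then V(1/2) = 0, V′(1/2) = 0, V″(1/2) = 0, V‴(1/2) = 0, and V⁗(1/2) = 2688. -/

import Mathlib

noncomputable section Stmt15Aux

def eA (q : ℝ) : ℝ := 3*q^2 - 2*q + 1/2
def eB (q : ℝ) : ℝ := 3*q^2 - 4*q + 3/2

lemma eA_pos (q : ℝ) : 0 < eA q := by unfold eA; nlinarith [sq_nonneg (3*q-1)]
lemma eB_pos (q : ℝ) : 0 < eB q := by unfold eB; nlinarith [sq_nonneg (3*q-2)]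

lemma hA (q : ℝ) : HasDerivAt eA (6*q-2) q := by
  unfold eA
  have h := (((hasDerivAt_pow 2 q).const_mul 3).sub ((hasDerivAt_id' q).const_mul 2)).add_const (1/2)
  refine h.congr_deriv ?_
  norm_num; ring
lemma hB (q : ℝ) : HasDerivAt eB (6*q-4) q := by
  unfold eB
  have h := (((hasDerivAt_pow 2 q).const_mul 3).sub ((hasDerivAt_id' q).const_mul 4)).add_const (3/2)
  refine h.congr_deriv ?_
  norm_num; ring

lemma hrA (q : ℝ) (p : ℝ) : HasDerivAt (fun q => eA q ^ p) (p * eA q ^ (p-1) * (6*q-2)) q :=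
  by simpa [mul_comm, mul_assoc, mul_left_comm] using (hA q).rpow_const (p := p) (Or.inl (eA_pos q).ne')
lemma hrB (q : ℝ) (p : ℝ) : HasDerivAt (fun q => eB q ^ p) (p * eB q ^ (p-1) * (6*q-4)) q :=
  by simpa [mul_comm, mul_assoc, mul_left_comm] using (hB q).rpow_const (p := p) (Or.inl (eB_pos q).ne')

lemma hla (q : ℝ) : HasDerivAt (fun q : ℝ => 6*q-2) 6 q := by
  simpa using ((hasDerivAt_id' q).const_mul 6).sub_const 2
lemma hlb (q : ℝ) : HasDerivAt (fun q : ℝ => 6*q-4) 6 q := by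
  simpa using ((hasDerivAt_id' q).const_mul 6).sub_const 4

def V0 (q : ℝ) : ℝ := -(1/2) * eA q ^ (-(1/2):ℝ) - 1/2 * eB q ^ (-(1/2):ℝ) + 2
def V1 (q : ℝ) : ℝ := 1/4 * (eA q ^ (-(3/2):ℝ) * (6*q-2)) + 1/4 * (eB q ^ (-(3/2):ℝ) * (6*q-4))
def V2 (q : ℝ) : ℝ := -(3/8) * (eA q ^ (-(5/2):ℝ) * (6*q-2)^2) + 3/2 * eA q ^ (-(3/2):ℝ)
  + (-(3/8) * (eB q ^ (-(5/2):ℝ) * (6*q-4)^2) + 3/2 * eB q ^ (-(3/2):ℝ))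
def V3 (q : ℝ) : ℝ := 15/16 * (eA q ^ (-(7/2):ℝ) * (6*q-2)^3) - 27/4 * (eA q ^ (-(5/2):ℝ) * (6*q-2))
  + (15/16 * (eB q ^ (-(7/2):ℝ) * (6*q-4)^3) - 27/4 * (eB q ^ (-(5/2):ℝ) * (6*q-4)))
def V4 (q : ℝ) : ℝ := -(105/32) * eA q ^ (-(9/2):ℝ) * (6*q-2)^4 + (135/4) * eA q ^ (-(7/2):ℝ) * (6*q-2)^2
  - (81/2) * eA q ^ (-(5/2):ℝ)
  + (-(105/32) * eB q ^ (-(9/2):ℝ) * (6*q-4)^4 + (135/4) * eB q ^ (-(7/2):ℝ) * (6*q-4)^2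
  - (81/2) * eB q ^ (-(5/2):ℝ))

lemma hV0 (q : ℝ) : HasDerivAt V0 (V1 q) q := by
  have h := (((hrA q (-(1/2))).const_mul (-(1/2))).sub ((hrB q (-(1/2))).const_mul (1/2))).add_const 2
  refine h.congr_deriv ?_
  unfold V1
  norm_num [show (-(1/2):ℝ)-1 = -(3/2) by norm_num]
  ring

lemma hV1 (q : ℝ) : HasDerivAt V1 (V2 q) q := by
  have h := (((hrA q (-(3/2))).mul (hla q)).const_mul (1/4)).add
    (((hrB q (-(3/2))).mul (hlb q)).const_mul (1/4))
  refine h.congr_deriv ?_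
  unfold V2
  norm_num [show (-(3/2):ℝ)-1 = -(5/2) by norm_num]
  ring

lemma hV2 (q : ℝ) : HasDerivAt V2 (V3 q) q := by
  have h := ((((hrA q (-(5/2))).mul ((hla q).pow 2)).const_mul (-(3/8))).add
      ((hrA q (-(3/2))).const_mul (3/2))).add
    ((((hrB q (-(5/2))).mul ((hlb q).pow 2)).const_mul (-(3/8))).add
      ((hrB q (-(3/2))).const_mul (3/2)))
  refine h.congr_deriv ?_
  unfold V3
  norm_num [show (-(5/2):ℝ)-1 = -(7/2) by norm_num, show (-(3/2):ℝ)-1 = -(5/2) by norm_num]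
  ring

lemma hV3 (q : ℝ) : HasDerivAt V3 (V4 q) q := by
  have h := ((((hrA q (-(7/2))).mul ((hla q).pow 3)).const_mul (15/16)).sub
      (((hrA q (-(5/2))).mul (hla q)).const_mul (27/4))).add
    ((((hrB q (-(7/2))).mul ((hlb q).pow 3)).const_mul (15/16)).sub
      (((hrB q (-(5/2))).mul (hlb q)).const_mul (27/4)))
  refine h.congr_deriv ?_
  unfold V4
  norm_num [show (-(7/2):ℝ)-1 = -(9/2) by norm_num, show (-(5/2):ℝ)-1 = -(7/2) by norm_num]
  ring

lemma q14 : ∀ p : ℝ, ((1/4:ℝ))^p = (1/2:ℝ)^(2*p) := by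
  intro p
  rw [show ((1:ℝ)/4) = (1/2:ℝ)^(2:ℕ) by norm_num, ← Real.rpow_natCast ((1/2:ℝ)) 2,
    ← Real.rpow_mul (by norm_num)]
  norm_num

lemma eA_half : eA (1/2) = 1/4 := by unfold eA; norm_num
lemma eB_half : eB (1/2) = 1/4 := by unfold eB; norm_num

lemma ev12 : ((1/4:ℝ))^(-(1/2):ℝ) = 2 := by rw [q14]; norm_num
lemma ev32 : ((1/4:ℝ))^(-(3/2):ℝ) = 8 := by rw [q14]; norm_num
lemma ev52 : ((1/4:ℝ))^(-(5/2):ℝ) = 32 := by rw [q14]; norm_num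
lemma ev72 : ((1/4:ℝ))^(-(7/2):ℝ) = 128 := by rw [q14]; norm_num
lemma ev92 : ((1/4:ℝ))^(-(9/2):ℝ) = 512 := by rw [q14]; norm_num

end Stmt15Aux

/-- In the equal-mass case, the restriction `V` of `U − c_J` to the tangent line
vanishes to third order at `1/2` and has fourth derivative `2688` there. -/
theorem stmt_15 :
    letI V : ℝ → ℝ := fun q =>
      -(1 / 2) / Real.sqrt (q ^ 2 + 2 * (q - 1 / 2) ^ 2)
        - (1 / 2) / Real.sqrt ((q - 1) ^ 2 + 2 * (q - 1 / 2) ^ 2) + 2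
    V (1 / 2) = 0 ∧ deriv V (1 / 2) = 0 ∧ iteratedDeriv 2 V (1 / 2) = 0 ∧
      iteratedDeriv 3 V (1 / 2) = 0 ∧ iteratedDeriv 4 V (1 / 2) = 2688 := by
  have hVeq : (fun q : ℝ =>
      -(1 / 2) / Real.sqrt (q ^ 2 + 2 * (q - 1 / 2) ^ 2)
        - (1 / 2) / Real.sqrt ((q - 1) ^ 2 + 2 * (q - 1 / 2) ^ 2) + 2) = V0 := by
    funext q
    show _ = V0 q
    unfold V0
    rw [show q^2+2*(q-1/2)^2 = eA q by unfold eA; ring,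
        show (q-1)^2+2*(q-1/2)^2 = eB q by unfold eB; ring,
        Real.sqrt_eq_rpow, Real.sqrt_eq_rpow,
        Real.rpow_neg (eA_pos q).le, Real.rpow_neg (eB_pos q).le]
    norm_num
    simp only [div_eq_mul_inv]
    ring
  show _ ∧ _ ∧ _ ∧ _ ∧ _
  rw [hVeq]
  have d1 : deriv V0 = V1 := funext fun q => (hV0 q).deriv
  have d2 : deriv V1 = V2 := funext fun q => (hV1 q).deriv
  have d3 : deriv V2 = V3 := funext fun q => (hV2 q).deriv
  have d4 : deriv V3 = V4 := funext fun q => (hV3 q).deriv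
  have i2 : iteratedDeriv 2 V0 = V2 := by
    rw [show (2:ℕ) = 1+1 from rfl, iteratedDeriv_succ, iteratedDeriv_one, d1, d2]
  have i3 : iteratedDeriv 3 V0 = V3 := by
    rw [show (3:ℕ) = 2+1 from rfl, iteratedDeriv_succ, i2, d3]
  have i4 : iteratedDeriv 4 V0 = V4 := by
    rw [show (4:ℕ) = 3+1 from rfl, iteratedDeriv_succ, i3, d4]
  refine ⟨?_, ?_, ?_, ?_, ?_⟩
  · unfold V0; rw [eA_half, eB_half, ev12]; norm_num
  · rw [d1]; unfold V1; rw [eA_half, eB_half, ev32]; norm_num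
  · rw [i2]; unfold V2; rw [eA_half, eB_half, ev52, ev32]; norm_num
  · rw [i3]; unfold V3; rw [eA_half, eB_half, ev72, ev52]; norm_num
  · rw [i4]; unfold V4; rw [eA_half, eB_half, ev92, ev72, ev52]; norm_num
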